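/- Let φ : [α₁,α₂] → [β₁,β₂] be a continuous strictly increasing bijection with inverse ψ : [β₁,β₂] → [α₁,α₂], and define F(a,b) = ∫_{α₁}^{a} φ(x) dx + ∫_{β₁}^{b} ψ(x) dx − a·b + α₁·β₁. Then for every a ∈ [α₁,α₂] and b ∈ [β₁,β₂], the equality F(a,b) = 0 holds if and only if the equality F(a,b) = −(ψ(b) − a)·(φ(a) − b) holds. -/

import Mathlib

open Set intervalIntegral

/-- Step estimate: the increment of `G t = ∫ φ + ∫ ψ∘... - t φ t` is bounded by
`(t₂ - t₁)(φ t₂ - φ t₁)`. -/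
private lemma young_step (α₁ α₂ β₁ β₂ : ℝ) (φ ψ : ℝ → ℝ)
    (hcont : ContinuousOn φ (Icc α₁ α₂))
    (hφmono : MonotoneOn φ (Icc α₁ α₂))
    (hψmono : MonotoneOn ψ (Icc β₁ β₂))
    (hφmaps : MapsTo φ (Icc α₁ α₂) (Icc β₁ β₂))
    (hinvL : ∀ x ∈ Icc α₁ α₂, ψ (φ x) = x)
    {t₁ t₂ : ℝ} (h1 : t₁ ∈ Icc α₁ α₂) (h2 : t₂ ∈ Icc α₁ α₂) (h12 : t₁ ≤ t₂) :
    |((∫ x in α₁..t₂, φ x) + (∫ y in β₁..φ t₂, ψ y) - t₂ * φ t₂)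
      - ((∫ x in α₁..t₁, φ x) + (∫ y in β₁..φ t₁, ψ y) - t₁ * φ t₁)|
      ≤ (t₂ - t₁) * (φ t₂ - φ t₁) := by
  have hαI : α₁ ∈ Icc α₁ α₂ := ⟨le_rfl, h1.1.trans h1.2⟩
  have hβI : β₁ ∈ Icc β₁ β₂ := ⟨le_rfl, (hφmaps h1).1.trans (hφmaps h1).2⟩
  have intφ : ∀ {u v : ℝ}, u ∈ Icc α₁ α₂ → v ∈ Icc α₁ α₂ →
      IntervalIntegrable φ MeasureTheory.volume u v := fun hu hv =>
    (hcont.mono (uIcc_subset_Icc hu hv)).intervalIntegrable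
  have intψ : ∀ {u v : ℝ}, u ∈ Icc β₁ β₂ → v ∈ Icc β₁ β₂ →
      IntervalIntegrable ψ MeasureTheory.volume u v := fun hu hv =>
    (hψmono.mono (uIcc_subset_Icc hu hv)).intervalIntegrable
  have hφ12 : φ t₁ ≤ φ t₂ := hφmono h1 h2 h12
  have hA : (∫ x in α₁..t₂, φ x) - (∫ x in α₁..t₁, φ x) = ∫ x in t₁..t₂, φ x :=
    integral_interval_sub_left (intφ hαI h2) (intφ hαI h1)
  have hB : (∫ y in β₁..φ t₂, ψ y) - (∫ y in β₁..φ t₁, ψ y) = ∫ y in φ t₁..φ t₂, ψ y :=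
    integral_interval_sub_left (intψ hβI (hφmaps h2)) (intψ hβI (hφmaps h1))
  have hA2 : (∫ x in t₁..t₂, φ x) ≤ (t₂ - t₁) * φ t₂ := by
    have := integral_mono_on (μ := MeasureTheory.volume) h12 (intφ h1 h2)
      (_root_.intervalIntegrable_const (c := φ t₂))
      (fun x hx => hφmono ⟨h1.1.trans hx.1, hx.2.trans h2.2⟩ h2 hx.2)
    simpa [smul_eq_mul] using this
  have hA1 : (t₂ - t₁) * φ t₁ ≤ ∫ x in t₁..t₂, φ x := by
    have := integral_mono_on (μ := MeasureTheory.volume) h12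
      (_root_.intervalIntegrable_const (c := φ t₁)) (intφ h1 h2)
      (fun x hx => hφmono h1 ⟨h1.1.trans hx.1, hx.2.trans h2.2⟩ hx.1)
    simpa [smul_eq_mul] using this
  have hmemψ : ∀ y ∈ Icc (φ t₁) (φ t₂), t₁ ≤ ψ y ∧ ψ y ≤ t₂ := by
    intro y hy
    have hyI : y ∈ Icc β₁ β₂ := ⟨(hφmaps h1).1.trans hy.1, hy.2.trans (hφmaps h2).2⟩
    constructor
    · have := hψmono (hφmaps h1) hyI hy.1
      rwa [hinvL t₁ h1] at this
    · have := hψmono hyI (hφmaps h2) hy.2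
      rwa [hinvL t₂ h2] at this
  have hB2 : (∫ y in φ t₁..φ t₂, ψ y) ≤ (φ t₂ - φ t₁) * t₂ := by
    have := integral_mono_on (μ := MeasureTheory.volume) hφ12
      (intψ (hφmaps h1) (hφmaps h2)) (_root_.intervalIntegrable_const (c := t₂))
      (fun y hy => (hmemψ y hy).2)
    simpa [smul_eq_mul] using this
  have hB1 : (φ t₂ - φ t₁) * t₁ ≤ ∫ y in φ t₁..φ t₂, ψ y := by
    have := integral_mono_on (μ := MeasureTheory.volume) hφ12
      (_root_.intervalIntegrable_const (c := t₁)) (intψ (hφmaps h1) (hφmaps h2))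
      (fun y hy => (hmemψ y hy).1)
    simpa [smul_eq_mul] using this
  have key : ((∫ x in α₁..t₂, φ x) + (∫ y in β₁..φ t₂, ψ y) - t₂ * φ t₂)
      - ((∫ x in α₁..t₁, φ x) + (∫ y in β₁..φ t₁, ψ y) - t₁ * φ t₁)
      = (∫ x in t₁..t₂, φ x) + (∫ y in φ t₁..φ t₂, ψ y) - t₂ * φ t₂ + t₁ * φ t₁ := by
    rw [← hA, ← hB]; ring
  rw [key, abs_le]
  constructor <;> nlinarith

/-- The inverse-function integral identity (Young's equality case along the graph). -/
private lemma young_G_zero (α₁ α₂ β₁ β₂ : ℝ) (φ ψ : ℝ → ℝ)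
    (hcont : ContinuousOn φ (Icc α₁ α₂))
    (hφmono : MonotoneOn φ (Icc α₁ α₂))
    (hψmono : MonotoneOn ψ (Icc β₁ β₂))
    (hφmaps : MapsTo φ (Icc α₁ α₂) (Icc β₁ β₂))
    (hinvL : ∀ x ∈ Icc α₁ α₂, ψ (φ x) = x)
    (hφα₁ : φ α₁ = β₁)
    {s : ℝ} (hs : s ∈ Icc α₁ α₂) :
    (∫ x in α₁..s, φ x) + (∫ y in β₁..φ s, ψ y) - s * φ s + α₁ * β₁ = 0 := by
  set G : ℝ → ℝ := fun t => (∫ x in α₁..t, φ x) + (∫ y in β₁..φ t, ψ y) - t * φ t with hG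
  have hαI : α₁ ∈ Icc α₁ α₂ := ⟨le_rfl, hs.1.trans hs.2⟩
  have hGα₁ : G α₁ = -(α₁ * β₁) := by
    simp [hG, hφα₁]
  -- it suffices to show G s = G α₁
  suffices h : G s = G α₁ by
    have : G s = -(α₁ * β₁) := h.trans hGα₁
    simp only [hG] at this
    linarith
  have hd0 : 0 ≤ s - α₁ := by linarith [hs.1]
  have key : ∀ n : ℕ, 1 ≤ n → |G s - G α₁| ≤ (s - α₁) * (φ s - β₁) / n := by
    intro n hn
    have hnpos : (0 : ℝ) < n := by exact_mod_cast hn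
    set d : ℝ := (s - α₁) / n with hdd
    have hdpos : 0 ≤ d := div_nonneg hd0 hnpos.le
    set x : ℕ → ℝ := fun i => α₁ + i * d with hx
    have hx0 : x 0 = α₁ := by simp [hx]
    have hxn : x n = s := by
      simp only [hx, hdd]
      field_simp
      ring
    have hxmem : ∀ i ≤ n, x i ∈ Icc α₁ α₂ := by
      intro i hi
      constructor
      · simp only [hx]; nlinarith [Nat.cast_nonneg (α := ℝ) i]
      · have hin : (i : ℝ) ≤ n := by exact_mod_cast hi
        have : x i ≤ x n := by
          simp only [hx]; nlinarith
        rw [hxn] at this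
        exact this.trans hs.2
    have hstep : ∀ i < n, |G (x (i + 1)) - G (x i)| ≤ d * (φ (x (i + 1)) - φ (x i)) := by
      intro i hi
      have h1 : x i ∈ Icc α₁ α₂ := hxmem i hi.le
      have h2 : x (i + 1) ∈ Icc α₁ α₂ := hxmem (i + 1) (by omega)
      have h12 : x i ≤ x (i + 1) := by
        simp only [hx]; push_cast; nlinarith
      have := young_step α₁ α₂ β₁ β₂ φ ψ hcont hφmono hψmono hφmaps hinvL h1 h2 h12
      have hdiff : x (i + 1) - x i = d := by simp only [hx]; push_cast; ring
      rw [hdiff] at this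
      exact this
    have htel : G s - G α₁ = ∑ i ∈ Finset.range n, (G (x (i + 1)) - G (x i)) := by
      rw [Finset.sum_range_sub (fun i => G (x i)), hx0, hxn]
    have htel2 : ∑ i ∈ Finset.range n, (φ (x (i + 1)) - φ (x i)) = φ s - β₁ := by
      rw [Finset.sum_range_sub (fun i => φ (x i)), hx0, hxn, hφα₁]
    calc |G s - G α₁| = |∑ i ∈ Finset.range n, (G (x (i + 1)) - G (x i))| := by rw [htel]
      _ ≤ ∑ i ∈ Finset.range n, |G (x (i + 1)) - G (x i)| := Finset.abs_sum_le_sum_abs _ _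
      _ ≤ ∑ i ∈ Finset.range n, d * (φ (x (i + 1)) - φ (x i)) :=
          Finset.sum_le_sum (fun i hi => hstep i (Finset.mem_range.mp hi))
      _ = d * (φ s - β₁) := by rw [← Finset.mul_sum, htel2]
      _ = (s - α₁) * (φ s - β₁) / n := by rw [hdd]; ring
  have htend : Filter.Tendsto (fun n : ℕ => (s - α₁) * (φ s - β₁) / n) Filter.atTop (nhds 0) :=
    tendsto_const_div_atTop_nhds_zero_nat _
  have habs : |G s - G α₁| ≤ 0 := by
    refine ge_of_tendsto htend ?_
    filter_upwards [Filter.eventually_ge_atTop 1] with n hn using key n hn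
  have := abs_nonneg (G s - G α₁)
  have : |G s - G α₁| = 0 := le_antisymm habs this
  have := abs_eq_zero.mp this
  linarith

theorem young_equality_iff
    (α₁ α₂ β₁ β₂ : ℝ) (φ ψ : ℝ → ℝ)
    (hα : α₁ < α₂) (hβ : β₁ < β₂)
    (hcont : ContinuousOn φ (Icc α₁ α₂))
    (hmono : StrictMonoOn φ (Icc α₁ α₂))
    (hbij : BijOn φ (Icc α₁ α₂) (Icc β₁ β₂))
    (hinvL : ∀ x ∈ Icc α₁ α₂, ψ (φ x) = x)
    (hinvR : ∀ y ∈ Icc β₁ β₂, φ (ψ y) = y)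
    (hψmaps : MapsTo ψ (Icc β₁ β₂) (Icc α₁ α₂))
    (a b : ℝ) (ha : a ∈ Icc α₁ α₂) (hb : b ∈ Icc β₁ β₂) :
    (∫ x in α₁..a, φ x) + (∫ x in β₁..b, ψ x) - a * b + α₁ * β₁ = 0 ↔
    (∫ x in α₁..a, φ x) + (∫ x in β₁..b, ψ x) - a * b + α₁ * β₁
      = -(ψ b - a) * (φ a - b) := by
  have hφmono : MonotoneOn φ (Icc α₁ α₂) := hmono.monotoneOn
  have hφmaps : MapsTo φ (Icc α₁ α₂) (Icc β₁ β₂) := hbij.mapsTo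
  have hψmono : MonotoneOn ψ (Icc β₁ β₂) := by
    intro y₁ hy₁ y₂ hy₂ h12
    by_contra h
    push_neg at h
    have := hmono (hψmaps hy₂) (hψmaps hy₁) h
    rw [hinvR y₁ hy₁, hinvR y₂ hy₂] at this
    linarith
  have hφα₁ : φ α₁ = β₁ := by
    obtain ⟨x, hx, hφx⟩ := hbij.surjOn ⟨le_rfl, hβ.le⟩
    have h1 : φ α₁ ≤ φ x := hφmono ⟨le_rfl, hα.le⟩ hx hx.1
    have h2 : β₁ ≤ φ α₁ := (hφmaps ⟨le_rfl, hα.le⟩).1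
    rw [hφx] at h1
    linarith
  set s : ℝ := ψ b with hsdef
  have hs : s ∈ Icc α₁ α₂ := hψmaps hb
  have hφs : φ s = b := hinvR b hb
  have intφ : ∀ {u v : ℝ}, u ∈ Icc α₁ α₂ → v ∈ Icc α₁ α₂ →
      IntervalIntegrable φ MeasureTheory.volume u v := fun hu hv =>
    (hcont.mono (uIcc_subset_Icc hu hv)).intervalIntegrable
  have hαI : α₁ ∈ Icc α₁ α₂ := ⟨le_rfl, hα.le⟩
  have hG : (∫ x in α₁..s, φ x) + (∫ y in β₁..b, ψ y) - s * b + α₁ * β₁ = 0 := by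
    have := young_G_zero α₁ α₂ β₁ β₂ φ ψ hcont hφmono hψmono hφmaps hinvL hφα₁ hs
    rwa [hφs] at this
  have hsplit : (∫ x in α₁..a, φ x) - (∫ x in α₁..s, φ x) = ∫ x in s..a, φ x :=
    integral_interval_sub_left (intφ hαI ha) (intφ hαI hs)
  have hsubint : (∫ x in s..a, (φ x - b)) = (∫ x in s..a, φ x) - (a - s) * b := by
    rw [integral_sub (intφ hs ha) _root_.intervalIntegrable_const]
    simp [smul_eq_mul]
  have hF : (∫ x in α₁..a, φ x) + (∫ x in β₁..b, ψ x) - a * b + α₁ * β₁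
      = ∫ x in s..a, (φ x - b) := by
    rw [hsubint, ← hsplit]
    linarith
  rcases lt_trichotomy s a with hlt | heq | hgt
  · -- s < a : both sides are false
    have hpos : 0 < ∫ x in s..a, (φ x - b) := by
      apply intervalIntegral_pos_of_pos_on ((intφ hs ha).sub _root_.intervalIntegrable_const)
        (fun x hx => ?_) hlt
      have hxI : x ∈ Icc α₁ α₂ := ⟨hs.1.trans hx.1.le, hx.2.le.trans ha.2⟩
      have := hmono hs hxI hx.1
      rw [hφs] at this
      linarith
    have hlt2 : (∫ x in s..a, (φ x - b)) < (a - s) * (φ a - b) := by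
      have hpos2 : 0 < ∫ x in s..a, (φ a - φ x) := by
        apply intervalIntegral_pos_of_pos_on
          (_root_.intervalIntegrable_const.sub (intφ hs ha)) (fun x hx => ?_) hlt
        have hxI : x ∈ Icc α₁ α₂ := ⟨hs.1.trans hx.1.le, hx.2.le.trans ha.2⟩
        have := hmono hxI ha hx.2
        linarith
      have heq2 : (∫ x in s..a, (φ a - φ x))
          = (a - s) * (φ a - b) - ∫ x in s..a, (φ x - b) := by
        rw [hsubint, integral_sub _root_.intervalIntegrable_const (intφ hs ha)]
        simp [smul_eq_mul]
        ring
      rw [heq2] at hpos2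
      linarith
    rw [hF]
    constructor
    · intro h; linarith
    · intro h
      have : -(s - a) * (φ a - b) = (a - s) * (φ a - b) := by ring
      rw [hsdef] at h
      rw [← hsdef] at h
      rw [this] at h
      linarith
  · -- s = a : both sides are true (both reduce to F = 0)
    rw [hF, ← heq]
    simp
  · -- a < s : both sides are false
    have hFalt : (∫ x in s..a, (φ x - b)) = ∫ x in a..s, (b - φ x) := by
      rw [integral_symm]
      rw [← intervalIntegral.integral_neg]
      congr 1
      funext x
      ring
    have hpos : 0 < ∫ x in a..s, (b - φ x) := by
      apply intervalIntegral_pos_of_pos_on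
        (_root_.intervalIntegrable_const.sub (intφ ha hs)) (fun x hx => ?_) hgt
      have hxI : x ∈ Icc α₁ α₂ := ⟨ha.1.trans hx.1.le, hx.2.le.trans hs.2⟩
      have := hmono hxI hs hx.2
      rw [hφs] at this
      linarith
    have hlt2 : (∫ x in a..s, (b - φ x)) < (s - a) * (b - φ a) := by
      have hpos2 : 0 < ∫ x in a..s, (φ x - φ a) := by
        apply intervalIntegral_pos_of_pos_on
          ((intφ ha hs).sub _root_.intervalIntegrable_const) (fun x hx => ?_) hgt
        have hxI : x ∈ Icc α₁ α₂ := ⟨ha.1.trans hx.1.le, hx.2.le.trans hs.2⟩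
        have := hmono ha hxI hx.1
        linarith
      have heq2 : (∫ x in a..s, (φ x - φ a))
          = (s - a) * (b - φ a) - ∫ x in a..s, (b - φ x) := by
        rw [integral_sub (intφ ha hs) _root_.intervalIntegrable_const,
          integral_sub _root_.intervalIntegrable_const (intφ ha hs)]
        simp [smul_eq_mul]
        ring
      rw [heq2] at hpos2
      linarith
    rw [hF, hFalt]
    constructor
    · intro h; linarith
    · intro h
      have : -(s - a) * (φ a - b) = (s - a) * (b - φ a) := by ring
      rw [hsdef] at h
      rw [← hsdef] at h
      rw [this] at h
      linarith
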